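/- A finite rooted tree T is b-skinny if every layer L_i(T) = {v : depth_T(v) = i−1} has at most b nodes. For every real b > 1, every n ≥ 1, every n-vertex graph G, and every tree-decomposition 𝒯 = (T, (B_x)_{x∈V(T)}) of G, there exists a rooted tree-decomposition 𝒬 = (Q, (D_q)_{q∈V(Q)}) of G such that: (i) every adhesion of 𝒬 is an adhesion of 𝒯; (ii) for each node q of Q, the bag D_q is the union of the bags B_y over the nodes y of some subtree T(q) of T such that (T(q), (B_y)_{y∈V(T(q))}) is a b-skinny tree-decomposition of the torso of 𝒬 at q; and (iii) the height of Q is at most log_b n. -/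

import Mathlib

/-- A finite rooted tree on vertex type `ι`, given by a parent map. -/
structure RTree (ι : Type) : Type where
  parent : ι → ι
  root : ι
  parent_root : parent root = root
  reach : ∀ x, ∃ n : ℕ, parent^[n] x = root

namespace RTree

variable {ι : Type}

/-- The depth of a node: the number of edges on the path to the root. -/
noncomputable def depth (T : RTree ι) (x : ι) : ℕ :=
  sInf {n : ℕ | T.parent^[n] x = T.root}

/-- The height of the tree: the maximum depth of a node. -/
noncomputable def height (T : RTree ι) : ℕ := sSup (Set.range T.depth)

/-- A rooted tree is `b`-skinny if every layer has at most `b` nodes. -/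
def Skinny (T : RTree ι) (b : ℝ) : Prop :=
  ∀ i : ℕ, (({x : ι | T.depth x = i}).ncard : ℝ) ≤ b

/-- Tree adjacency: `x` and `y` are distinct and one is the parent of the other. -/
def Adj (T : RTree ι) (x y : ι) : Prop := x ≠ y ∧ (T.parent x = y ∨ T.parent y = x)

/-- The underlying (simple) graph of the tree. -/
def graph (T : RTree ι) : SimpleGraph ι := SimpleGraph.fromRel (fun x y => T.parent x = y)

end RTree

/-- A (rooted) tree-decomposition of `G` indexed by the rooted tree `T`:
for every vertex `a`, the set of nodes whose bag contains `a` induces a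
non-empty connected subtree, and every edge is contained in some bag. -/
structure TDecomp {α ι : Type} (G : SimpleGraph α) (T : RTree ι) : Type where
  bag : ι → Set α
  bags_connected : ∀ a : α, (T.graph.induce {x : ι | a ∈ bag x}).Connected
  edges_covered : ∀ a b : α, G.Adj a b → ∃ x : ι, a ∈ bag x ∧ b ∈ bag x

/-- The torso of a tree-decomposition at a node `x`: the graph on `bag x`
where `u, v` are adjacent if `uv ∈ E(G)` or both lie in `bag x ∩ bag y`
for some tree-neighbour `y` of `x`. -/
def torso {α ι : Type} {G : SimpleGraph α} {T : RTree ι} (D : TDecomp G T) (x : ι) :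
    SimpleGraph ↥(D.bag x) :=
  SimpleGraph.fromRel (fun u v =>
    G.Adj (u : α) (v : α) ∨ ∃ y : ι, T.Adj x y ∧ (u : α) ∈ D.bag y ∧ (v : α) ∈ D.bag y)


namespace RTree

variable {ι : Type}

variable (T : RTree ι)

lemma graph_adj {x y : ι} : T.graph.Adj x y ↔ x ≠ y ∧ (T.parent x = y ∨ T.parent y = x) := by
  simp [graph]

lemma root_fixed (m : ℕ) : T.parent^[m] T.root = T.root := Function.iterate_fixed T.parent_root m

lemma depth_spec (x : ι) : T.parent^[T.depth x] x = T.root := Nat.sInf_mem (T.reach x)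

lemma depth_min {x : ι} {m : ℕ} (h : m < T.depth x) : T.parent^[m] x ≠ T.root :=
  Nat.notMem_of_lt_sInf h

lemma depth_le {x : ι} {m : ℕ} (h : T.parent^[m] x = T.root) : T.depth x ≤ m := Nat.sInf_le h

lemma depth_root : T.depth T.root = 0 := Nat.le_zero.1 (T.depth_le (by simp))

lemma depth_eq_zero_iff {x : ι} : T.depth x = 0 ↔ x = T.root := by
  constructor
  · intro h
    have := T.depth_spec x
    rwa [h] at this
  · rintro rfl; exact T.depth_root

lemma parent_eq_self {x : ι} (h : T.parent x = x) : x = T.root := by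
  obtain ⟨n, hn⟩ := T.reach x
  rwa [Function.iterate_fixed h n] at hn

lemma depth_parent {x : ι} (h : x ≠ T.root) : T.depth (T.parent x) + 1 = T.depth x := by
  have h1 : 1 ≤ T.depth x := by
    rcases Nat.eq_zero_or_pos (T.depth x) with h0 | h0
    · exact absurd (T.depth_eq_zero_iff.1 h0) h
    · exact h0
  have hle : T.depth (T.parent x) ≤ T.depth x - 1 := by
    apply T.depth_le
    have h2 : T.parent^[T.depth x - 1 + 1] x = T.root := by
      have h3 : T.depth x - 1 + 1 = T.depth x := by omega
      rw [h3]; exact T.depth_spec x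
    rwa [Function.iterate_succ_apply] at h2
  have hge : T.depth x - 1 ≤ T.depth (T.parent x) := by
    by_contra hlt
    push_neg at hlt
    have : T.depth (T.parent x) + 1 < T.depth x := by omega
    exact T.depth_min this (by rw [Function.iterate_succ_apply]; exact T.depth_spec (T.parent x))
  omega

lemma depth_iterate {x : ι} {j : ℕ} (h : j ≤ T.depth x) :
    T.depth (T.parent^[j] x) = T.depth x - j := by
  induction j with
  | zero => simp
  | succ i ih =>
    have hi : i ≤ T.depth x := by omega
    have hne : T.parent^[i] x ≠ T.root := T.depth_min (by omega)
    have h2 := T.depth_parent hne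
    rw [Function.iterate_succ_apply']
    have hih := ih hi
    omega

/-- `u` is an ancestor (or equal) of `v`. -/
def Anc (u v : ι) : Prop := ∃ j : ℕ, T.parent^[j] v = u

lemma anc_refl (x : ι) : T.Anc x x := ⟨0, rfl⟩

lemma anc_root (x : ι) : T.Anc T.root x := T.reach x

lemma anc_parent (x : ι) : T.Anc (T.parent x) x := ⟨1, rfl⟩

lemma anc_canon {u v : ι} (h : T.Anc u v) :
    T.depth u ≤ T.depth v ∧ T.parent^[T.depth v - T.depth u] v = u := by
  obtain ⟨j, hj⟩ := h
  rcases le_or_gt j (T.depth v) with hle | hlt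
  · have hd := T.depth_iterate hle
    rw [hj] at hd
    constructor
    · omega
    · have : T.depth v - T.depth u = j := by omega
      rw [this]; exact hj
  · have : u = T.root := by
      have : T.parent^[j] v = T.parent^[j - T.depth v] (T.parent^[T.depth v] v) := by
        rw [← Function.iterate_add_apply]
        congr 1
        omega
      rw [this, T.depth_spec, T.root_fixed] at hj
      exact hj.symm
    subst this
    rw [T.depth_root]
    exact ⟨Nat.zero_le _, by simpa using T.depth_spec v⟩

lemma anc_trans {u v z : ι} (h1 : T.Anc u v) (h2 : T.Anc v z) : T.Anc u z := by
  obtain ⟨i, hi⟩ := h1; obtain ⟨j, hj⟩ := h2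
  exact ⟨i + j, by rw [Function.iterate_add_apply, hj, hi]⟩

lemma anc_eq_of_depth_le {u v : ι} (h : T.Anc u v) (hd : T.depth v ≤ T.depth u) : u = v := by
  obtain ⟨h1, h2⟩ := T.anc_canon h
  have : T.depth v - T.depth u = 0 := by omega
  rw [this] at h2
  exact h2.symm

lemma anc_antisymm {u v : ι} (h1 : T.Anc u v) (h2 : T.Anc v u) : u = v :=
  T.anc_eq_of_depth_le h1 (T.anc_canon h2).1

lemma anc_comparable {u v z : ι} (hu : T.Anc u z) (hv : T.Anc v z) : T.Anc u v ∨ T.Anc v u := by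
  obtain ⟨hu1, hu2⟩ := T.anc_canon hu
  obtain ⟨hv1, hv2⟩ := T.anc_canon hv
  rcases le_total (T.depth u) (T.depth v) with hle | hle
  · left
    have h3 : T.parent^[(T.depth z - T.depth u) - (T.depth z - T.depth v) + (T.depth z - T.depth v)] z = u := by
      have : (T.depth z - T.depth u) - (T.depth z - T.depth v) + (T.depth z - T.depth v)
          = T.depth z - T.depth u := by omega
      rw [this]; exact hu2
    rw [Function.iterate_add_apply, hv2] at h3
    exact ⟨_, h3⟩
  · right
    have h3 : T.parent^[(T.depth z - T.depth v) - (T.depth z - T.depth u) + (T.depth z - T.depth u)] z = v := by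
      have : (T.depth z - T.depth v) - (T.depth z - T.depth u) + (T.depth z - T.depth u)
          = T.depth z - T.depth v := by omega
      rw [this]; exact hv2
    rw [Function.iterate_add_apply, hu2] at h3
    exact ⟨_, h3⟩

/-- The parent-chain from `z` up to `m` stays inside `S`. -/
def chainIn (S : Set ι) (z m : ι) : Prop :=
  ∃ j : ℕ, T.parent^[j] z = m ∧ ∀ i ≤ j, T.parent^[i] z ∈ S

lemma chainIn_self {S : Set ι} {z : ι} (h : z ∈ S) : T.chainIn S z z :=
  ⟨0, rfl, by intro i hi; simp_all⟩

lemma chainIn_anc {S : Set ι} {z m : ι} (h : T.chainIn S z m) : T.Anc m z := by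
  obtain ⟨j, hj, _⟩ := h; exact ⟨j, hj⟩

lemma chainIn_mem_left {S : Set ι} {z m : ι} (h : T.chainIn S z m) : z ∈ S := by
  obtain ⟨j, _, hm⟩ := h
  simpa using hm 0 (Nat.zero_le _)

lemma chainIn_mem_right {S : Set ι} {z m : ι} (h : T.chainIn S z m) : m ∈ S := by
  obtain ⟨j, hj, hm⟩ := h
  have := hm j le_rfl
  rwa [hj] at this

lemma chainIn_step {S : Set ι} {z m : ι} (hz : z ∈ S) (h : T.chainIn S (T.parent z) m) :
    T.chainIn S z m := by
  obtain ⟨j, hj, hm⟩ := h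
  refine ⟨j + 1, by rw [Function.iterate_succ_apply]; exact hj, ?_⟩
  intro i hi
  cases i with
  | zero => simpa using hz
  | succ i => rw [Function.iterate_succ_apply]; exact hm i (by omega)

lemma chainIn_tail {S : Set ι} {z m : ι} (h : T.chainIn S z m) (hne : z ≠ m) :
    T.chainIn S (T.parent z) m := by
  obtain ⟨j, hj, hm⟩ := h
  cases j with
  | zero => simp at hj; exact absurd hj hne
  | succ j =>
    refine ⟨j, by rw [← Function.iterate_succ_apply]; exact hj, ?_⟩
    intro i hi
    rw [← Function.iterate_succ_apply]
    exact hm (i + 1) (by omega)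

lemma chainIn_parent_mem {S : Set ι} {z m : ι} (h : T.chainIn S z m) (hne : z ≠ m) :
    T.parent z ∈ S :=
  T.chainIn_mem_left (T.chainIn_tail h hne)

lemma chainIn_canon {S : Set ι} {z m : ι} (h : T.chainIn S z m) :
    T.chainIn S z m ∧ ∀ i ≤ T.depth z - T.depth m, T.parent^[i] z ∈ S := by
  obtain ⟨j, hj, hm⟩ := h
  have hjc : T.depth z - T.depth m ≤ j := by
    rcases le_or_gt j (T.depth z) with hle | hlt
    · have := T.depth_iterate hle
      rw [hj] at this
      omega
    · omega
  exact ⟨⟨j, hj, hm⟩, fun i hi => hm i (le_trans hi hjc)⟩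

lemma chainIn_mid {S : Set ι} {z m u : ι} (h : T.chainIn S z m) (hu : T.Anc u z)
    (hd : T.depth m ≤ T.depth u) : u ∈ S ∧ T.chainIn S z u := by
  have hc := (T.chainIn_canon h).2
  obtain ⟨hu1, hu2⟩ := T.anc_canon hu
  have hanc := T.chainIn_anc h
  obtain ⟨hm1, _⟩ := T.anc_canon hanc
  have hiu : T.depth z - T.depth u ≤ T.depth z - T.depth m := by omega
  have humem : u ∈ S := by
    have := hc _ hiu
    rwa [hu2] at this
  exact ⟨humem, ⟨T.depth z - T.depth u, hu2, fun i hi => hc i (le_trans hi hiu)⟩⟩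

lemma chainIn_trans {S : Set ι} {z m m' : ι} (h1 : T.chainIn S z m) (h2 : T.chainIn S m m') :
    T.chainIn S z m' := by
  obtain ⟨j, hj, hmj⟩ := h1
  obtain ⟨j', hj', hmj'⟩ := h2
  refine ⟨j' + j, by rw [Function.iterate_add_apply, hj]; exact hj', ?_⟩
  intro i hi
  rcases le_or_gt i j with hle | hlt
  · exact hmj i hle
  · have : T.parent^[i] z = T.parent^[i - j] (T.parent^[j] z) := by
      rw [← Function.iterate_add_apply]; congr 1; omega
    rw [this, hj]
    exact hmj' _ (by omega)

end RTree

namespace RTree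

variable {ι : Type} (T : RTree ι)

lemma conn_aux {S : Set ι} {x y : ↥S} (w : (T.graph.induce S).Walk x y) :
    ∃ m, T.chainIn S ↑x m ∧ T.chainIn S ↑y m := by
  induction w with
  | nil => exact ⟨_, T.chainIn_self (Subtype.mem _), T.chainIn_self (Subtype.mem _)⟩
  | @cons x x1 y h p ih =>
    obtain ⟨m, c1, c2⟩ := ih
    have hadj : T.graph.Adj ↑x ↑x1 := h
    rw [T.graph_adj] at hadj
    obtain ⟨hne, hor | hor⟩ := hadj
    · exact ⟨m, T.chainIn_step (Subtype.mem x) (by rw [hor]; exact c1), c2⟩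
    · by_cases hm : (x1 : ι) = m
      · refine ⟨↑x, T.chainIn_self (Subtype.mem x), ?_⟩
        refine T.chainIn_trans c2 ?_
        rw [← hm]
        exact ⟨1, by simpa using hor, by
          intro i hi
          interval_cases i
          · exact Subtype.mem x1
          · simpa [hor] using Subtype.mem x⟩
      · have := T.chainIn_tail c1 hm
        rw [hor] at this
        exact ⟨m, this, c2⟩

theorem chain_of_connected [Finite ι] {S : Set ι}
    (h : (T.graph.induce S).Connected) : ∃ t ∈ S, ∀ z ∈ S, T.chainIn S z t := by
  have hne : S.Nonempty := by
    obtain ⟨⟨x, hx⟩⟩ := h.nonempty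
    exact ⟨x, hx⟩
  obtain ⟨t, htS, htmin⟩ := Set.exists_min_image S T.depth (Set.toFinite S) hne
  refine ⟨t, htS, fun z hz => ?_⟩
  obtain ⟨w⟩ := h.preconnected ⟨z, hz⟩ ⟨t, htS⟩
  obtain ⟨m, c1, c2⟩ := T.conn_aux w
  have hmt : m = t := by
    have hanc := T.chainIn_anc c2
    have hmem := T.chainIn_mem_right c2
    exact T.anc_eq_of_depth_le hanc (htmin m hmem)
  rwa [hmt] at c1

lemma reachable_of_chain {S : Set ι} {t : ι} (ht : t ∈ S) :
    ∀ (j : ℕ) (z : ι) (hz : z ∈ S), T.parent^[j] z = t → (∀ i ≤ j, T.parent^[i] z ∈ S) →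
      (T.graph.induce S).Reachable ⟨z, hz⟩ ⟨t, ht⟩ := by
  intro j
  induction j with
  | zero =>
    intro z hz hj _
    simp only [Function.iterate_zero, id] at hj
    subst hj
    rfl
  | succ j ih =>
    intro z hz hj hmem
    by_cases hzt : z = t
    · subst hzt; rfl
    · have hpz : T.parent z ≠ z := by
        intro hfix
        rw [Function.iterate_fixed hfix] at hj
        exact hzt hj
      have hpmem : T.parent z ∈ S := by simpa using hmem 1 (by omega)
      have hadj : (T.graph.induce S).Adj ⟨z, hz⟩ ⟨T.parent z, hpmem⟩ := by
        show T.graph.Adj z (T.parent z)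
        rw [T.graph_adj]
        exact ⟨fun h => hpz h.symm, Or.inl rfl⟩
      refine hadj.reachable.trans (ih (T.parent z) hpmem ?_ ?_)
      · rw [← Function.iterate_succ_apply]; exact hj
      · intro i hi
        rw [← Function.iterate_succ_apply]
        exact hmem (i + 1) (by omega)

theorem connected_of_chain {S : Set ι} {t : ι} (ht : t ∈ S)
    (h : ∀ z ∈ S, T.chainIn S z t) : (T.graph.induce S).Connected := by
  rw [SimpleGraph.connected_iff]
  refine ⟨?_, ⟨⟨t, ht⟩⟩⟩
  intro ⟨z, hz⟩ ⟨z', hz'⟩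
  obtain ⟨j, hj, hm⟩ := h z hz
  obtain ⟨j', hj', hm'⟩ := h z' hz'
  exact (T.reachable_of_chain ht j z hz hj hm).trans (T.reachable_of_chain ht j' z' hz' hj' hm').symm

end RTree

namespace RTree

variable {ι : Type} (T : RTree ι) (s : Set ι) (ρ : ι)
  (hchain : ∀ x ∈ s, T.chainIn s x ρ)

open Classical in
noncomputable def subParent : ↥s → ↥s := fun x =>
  if h : (x : ι) = ρ then x
  else ⟨T.parent ↑x, T.chainIn_parent_mem (hchain ↑x x.2) h⟩

lemma subParent_val_of_ne {x : ↥s} (h : (x : ι) ≠ ρ) :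
    (subParent T s ρ hchain x : ι) = T.parent ↑x := by
  simp [subParent, h]

lemma subParent_reach (hρ : ρ ∈ s) :
    ∀ (j : ℕ) (x : ↥s), T.parent^[j] ↑x = ρ →
      ∃ n : ℕ, (subParent T s ρ hchain)^[n] x = ⟨ρ, hρ⟩ := by
  intro j
  induction j with
  | zero =>
    intro x hx
    exact ⟨0, Subtype.ext (by simpa using hx)⟩
  | succ j ih =>
    intro x hx
    by_cases h : (x : ι) = ρ
    · exact ⟨0, Subtype.ext h⟩
    · have hval : (subParent T s ρ hchain x : ι) = T.parent ↑x :=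
        subParent_val_of_ne T s ρ hchain h
      have : T.parent^[j] ↑(subParent T s ρ hchain x) = ρ := by
        rw [hval, ← Function.iterate_succ_apply]; exact hx
      obtain ⟨n, hn⟩ := ih _ this
      exact ⟨n + 1, by rw [Function.iterate_succ_apply]; exact hn⟩

noncomputable def subtree (hρ : ρ ∈ s) : RTree ↥s where
  parent := subParent T s ρ hchain
  root := ⟨ρ, hρ⟩
  parent_root := by simp [subParent]
  reach := fun x => by
    obtain ⟨j, hj, _⟩ := hchain ↑x x.2
    exact subParent_reach T s ρ hchain hρ j x hj

lemma subtree_iterate_val (hρ : ρ ∈ s) {x : ↥s} {j : ℕ}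
    (hne : ∀ i < j, T.parent^[i] (x : ι) ≠ ρ) (hmem : ∀ i ≤ j, T.parent^[i] (x : ι) ∈ s) :
    ∀ i ≤ j, (((subtree T s ρ hchain hρ).parent^[i] x : ι)) = T.parent^[i] (x : ι) := by
  intro i hi
  induction i with
  | zero => rfl
  | succ i ih =>
    have hii : i ≤ j := by omega
    have hval := ih hii
    rw [Function.iterate_succ_apply', Function.iterate_succ_apply']
    have hcne : ((subtree T s ρ hchain hρ).parent^[i] x : ι) ≠ ρ := by
      rw [hval]; exact hne i (by omega)
    have : (subtree T s ρ hchain hρ).parent ((subtree T s ρ hchain hρ).parent^[i] x)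
        = subParent T s ρ hchain ((subtree T s ρ hchain hρ).parent^[i] x) := rfl
    rw [this, subParent_val_of_ne T s ρ hchain hcne, hval]

lemma subtree_depth (hρ : ρ ∈ s) (x : ↥s) :
    (subtree T s ρ hchain hρ).depth x = T.depth (x : ι) - T.depth ρ := by
  set Tq := subtree T s ρ hchain hρ with hTq
  have hancρ : T.Anc ρ ↑x := T.chainIn_anc (hchain ↑x x.2)
  obtain ⟨hdle, hcanon⟩ := T.anc_canon hancρ
  set m := T.depth (x : ι) - T.depth ρ with hm
  have hmemall := (T.chainIn_canon (hchain ↑x x.2)).2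
  have hne : ∀ i < m, T.parent^[i] (x : ι) ≠ ρ := by
    intro i hilt heq
    have : T.depth (T.parent^[i] (x : ι)) = T.depth (x : ι) - i := T.depth_iterate (by omega)
    rw [heq] at this
    omega
  have hval := subtree_iterate_val T s ρ hchain hρ (x := x) (j := m) hne hmemall
  have hup : Tq.parent^[m] x = Tq.root := by
    apply Subtype.ext
    rw [hval m le_rfl]
    exact hcanon
  have h1 : Tq.depth x ≤ m := Tq.depth_le hup
  rcases lt_or_eq_of_le h1 with hlt | heq
  · exfalso
    have hspec := Tq.depth_spec x
    have hvv := hval (Tq.depth x) (by omega)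
    have : (Tq.root : ι) = ρ := rfl
    apply hne (Tq.depth x) hlt
    rw [← hvv, hspec]
    rfl
  · exact heq

lemma subtree_chainIn (hρ : ρ ∈ s) (V : Set ↥s) (x m : ↥s) (j : ℕ)
    (hj : T.parent^[j] (x : ι) = ↑m) (hne : ∀ i < j, T.parent^[i] (x : ι) ≠ ρ)
    (hmem : ∀ i ≤ j, ∃ h : T.parent^[i] (x : ι) ∈ s, (⟨T.parent^[i] (x : ι), h⟩ : ↥s) ∈ V) :
    (subtree T s ρ hchain hρ).chainIn V x m := by
  have hmem' : ∀ i ≤ j, T.parent^[i] (x : ι) ∈ s := fun i hi => (hmem i hi).1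
  have hval := subtree_iterate_val T s ρ hchain hρ (x := x) (j := j) hne hmem'
  refine ⟨j, Subtype.ext (by rw [hval j le_rfl]; exact hj), ?_⟩
  intro i hi
  obtain ⟨hs, hV⟩ := hmem i hi
  have : (subtree T s ρ hchain hρ).parent^[i] x = ⟨T.parent^[i] (x : ι), hs⟩ :=
    Subtype.ext (hval i hi)
  rw [this]
  exact hV

end RTree

section Construction

open RTree

variable {α ι : Type} [Finite α] [Finite ι] {G : SimpleGraph α} {T : RTree ι}

/-- The set of tree nodes whose bag contains the vertex `a`. -/
def Sa (D : TDecomp G T) (a : α) : Set ι := {x | a ∈ D.bag x}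

/-- The top (minimum-depth) node of `Sa D a`. -/
noncomputable def tp (D : TDecomp G T) (a : α) : ι :=
  (T.chain_of_connected (D.bags_connected a)).choose

lemma tp_mem (D : TDecomp G T) (a : α) : tp D a ∈ Sa D a :=
  (T.chain_of_connected (D.bags_connected a)).choose_spec.1

lemma tp_chain (D : TDecomp G T) (a : α) : ∀ z ∈ Sa D a, T.chainIn (Sa D a) z (tp D a) :=
  (T.chain_of_connected (D.bags_connected a)).choose_spec.2

lemma tp_anc (D : TDecomp G T) {a : α} {z : ι} (hz : z ∈ Sa D a) : T.Anc (tp D a) z :=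
  T.chainIn_anc (tp_chain D a z hz)

/-- The set of descendants of `x` (including `x`). -/
def RTree.desc (T : RTree ι) (x : ι) : Set ι := {y | T.Anc x y}

/-- The vertices confined to the subtree below `x`. -/
def conf (D : TDecomp G T) (x : ι) : Set α := {a | Sa D a ⊆ T.desc x}

/-- The weight of a node: the number of vertices confined below it. -/
noncomputable def wt (D : TDecomp G T) (x : ι) : ℕ := (conf D x).ncard

lemma desc_mono {x y : ι} (h : T.Anc x y) : T.desc y ⊆ T.desc x :=
  fun _ hz => T.anc_trans h hz

lemma wt_mono (D : TDecomp G T) {x y : ι} (h : T.Anc x y) : wt D y ≤ wt D x :=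
  Set.ncard_le_ncard (fun _ ha => Set.Subset.trans ha (desc_mono h)) (Set.toFinite _)

lemma wt_root (D : TDecomp G T) : wt D T.root = Nat.card α := by
  have : conf D T.root = Set.univ := by
    ext a
    simp only [conf, Set.mem_setOf_eq, Set.mem_univ, iff_true]
    exact fun z _ => T.anc_root z
  rw [wt, this, Set.ncard_univ]

lemma wt_pos_of_mem (D : TDecomp G T) {x : ι} {a : α} (h : a ∈ conf D x) : 1 ≤ wt D x := by
  rw [wt, Nat.one_le_iff_ne_zero]
  intro h0
  rw [Set.ncard_eq_zero (Set.toFinite _)] at h0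
  rw [h0] at h
  exact h

lemma tp_conf (D : TDecomp G T) (a : α) : a ∈ conf D (tp D a) :=
  fun _ hz => tp_anc D hz

open Classical in
/-- Fuelled helper for the part-root map. -/
noncomputable def pstatAux (par : ι → ι) (rt : ι) (w : ι → ℕ) (k : ℕ) : ℕ → ι → ι
  | 0, x => x
  | (d+1), x =>
    if x = rt then x
    else
      let ρ := pstatAux par rt w k d (par x)
      if 1 ≤ w x ∧ (k+1) * w x ≤ w ρ then x else ρ

/-- The root of the part containing `x`. -/
noncomputable def pstat (D : TDecomp G T) (k : ℕ) (x : ι) : ι :=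
  pstatAux T.parent T.root (wt D) k (T.depth x) x

lemma pstat_root (D : TDecomp G T) (k : ℕ) : pstat D k T.root = T.root := by
  rw [pstat, T.depth_root]
  rfl

lemma pstatAux_stable (D : TDecomp G T) (k : ℕ) :
    ∀ (d : ℕ) (x : ι), T.depth x ≤ d → pstatAux T.parent T.root (wt D) k d x = pstat D k x := by
  intro d
  induction d using Nat.strong_induction_on with
  | _ d IH =>
    intro x hx
    cases d with
    | zero =>
      have hx0 : T.depth x = 0 := by omega
      have : x = T.root := T.depth_eq_zero_iff.1 hx0
      subst this
      rw [pstat_root]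
      rfl
    | succ e =>
      by_cases hroot : x = T.root
      · subst hroot
        rw [pstat_root]
        simp [pstatAux]
      · have hd : T.depth (T.parent x) + 1 = T.depth x := T.depth_parent hroot
        have hp : pstatAux T.parent T.root (wt D) k e (T.parent x) = pstat D k (T.parent x) :=
          IH e (by omega) (T.parent x) (by omega)
        obtain ⟨d', hd'⟩ : ∃ d', T.depth x = d' + 1 := ⟨T.depth (T.parent x), hd.symm⟩
        have hp' : pstatAux T.parent T.root (wt D) k d' (T.parent x) = pstat D k (T.parent x) :=
          IH d' (by omega) (T.parent x) (by omega)
        rw [pstat, hd']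
        simp only [pstatAux, hroot, if_false, hp, hp']

lemma pstat_eq (D : TDecomp G T) (k : ℕ) {x : ι} (h : x ≠ T.root) :
    pstat D k x = if 1 ≤ wt D x ∧ (k+1) * wt D x ≤ wt D (pstat D k (T.parent x)) then x
      else pstat D k (T.parent x) := by
  have hd : T.depth (T.parent x) + 1 = T.depth x := T.depth_parent h
  obtain ⟨d', hd'⟩ : ∃ d', T.depth x = d' + 1 := ⟨T.depth (T.parent x), hd.symm⟩
  have hp' : pstatAux T.parent T.root (wt D) k d' (T.parent x) = pstat D k (T.parent x) :=
    pstatAux_stable D k d' (T.parent x) (by omega)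
  rw [pstat, hd']
  simp only [pstatAux, h, if_false, hp']

lemma pstat_anc (D : TDecomp G T) (k : ℕ) (x : ι) : T.Anc (pstat D k x) x := by
  suffices h : ∀ (n : ℕ) (x : ι), T.depth x = n → T.Anc (pstat D k x) x from
    h (T.depth x) x rfl
  intro n
  induction n using Nat.strong_induction_on with
  | _ n IH =>
    intro x hx
    by_cases hroot : x = T.root
    · subst hroot; rw [pstat_root]; exact T.anc_refl _
    · rw [pstat_eq D k hroot]
      split_ifs with hc
      · exact T.anc_refl _
      · have hd : T.depth (T.parent x) + 1 = T.depth x := T.depth_parent hroot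
        exact T.anc_trans (IH (T.depth (T.parent x)) (by omega) _ rfl) (T.anc_parent x)

lemma pstat_isroot (D : TDecomp G T) (k : ℕ) (x : ι) :
    pstat D k (pstat D k x) = pstat D k x := by
  suffices h : ∀ (n : ℕ) (x : ι), T.depth x = n → pstat D k (pstat D k x) = pstat D k x from
    h (T.depth x) x rfl
  intro n
  induction n using Nat.strong_induction_on with
  | _ n IH =>
    intro x hx
    by_cases hroot : x = T.root
    · subst hroot; rw [pstat_root, pstat_root]
    · rw [pstat_eq D k hroot]
      split_ifs with hc
      · rw [pstat_eq D k hroot, if_pos hc]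
      · have hd : T.depth (T.parent x) + 1 = T.depth x := T.depth_parent hroot
        exact IH (T.depth (T.parent x)) (by omega) _ rfl

lemma pstat_cond (D : TDecomp G T) (k : ℕ) {x : ι} (hroot : x ≠ T.root)
    (hx : pstat D k x = x) :
    1 ≤ wt D x ∧ (k+1) * wt D x ≤ wt D (pstat D k (T.parent x)) := by
  by_contra hc
  rw [pstat_eq D k hroot, if_neg hc] at hx
  have hanc : T.Anc (pstat D k (T.parent x)) (T.parent x) := pstat_anc D k _
  have h1 : T.depth (pstat D k (T.parent x)) ≤ T.depth (T.parent x) := (T.anc_canon hanc).1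
  have h2 : T.depth (T.parent x) + 1 = T.depth x := T.depth_parent hroot
  rw [hx] at h1
  omega

lemma pstat_wt_pos (D : TDecomp G T) (k : ℕ) (hα : 1 ≤ Nat.card α) {x : ι}
    (hx : pstat D k x = x) : 1 ≤ wt D x := by
  by_cases hroot : x = T.root
  · subst hroot; rw [wt_root]; exact hα
  · exact (pstat_cond D k hroot hx).1

end Construction

section ConstructionB

open RTree

variable {α ι : Type} [Finite α] [Finite ι] {G : SimpleGraph α} {T : RTree ι}

/-- The type of part-roots. -/
abbrev PRoot (D : TDecomp G T) (k : ℕ) : Type := {x : ι // pstat D k x = x}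

/-- The node set of the part with root `ρ`. -/
def sset (D : TDecomp G T) (k : ℕ) (ρ : ι) : Set ι := {z | pstat D k z = ρ ∧ 1 ≤ wt D z}

lemma sset_mem_self (D : TDecomp G T) (k : ℕ) (hα : 1 ≤ Nat.card α) {ρ : ι}
    (hρ : pstat D k ρ = ρ) : ρ ∈ sset D k ρ :=
  ⟨hρ, pstat_wt_pos D k hα hρ⟩

lemma sset_anc (D : TDecomp G T) (k : ℕ) {ρ z : ι} (hz : z ∈ sset D k ρ) : T.Anc ρ z := by
  have := pstat_anc D k z
  rwa [hz.1] at this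

lemma sset_ne_root (D : TDecomp G T) (k : ℕ) {ρ z : ι} (hz : z ∈ sset D k ρ) (hne : z ≠ ρ) :
    z ≠ T.root := by
  intro h
  subst h
  have h1 := hz.1
  rw [pstat_root] at h1
  exact hne h1

lemma sset_parent (D : TDecomp G T) (k : ℕ) {ρ z : ι} (hz : z ∈ sset D k ρ) (hne : z ≠ ρ) :
    T.parent z ∈ sset D k ρ ∧ wt D ρ < (k+1) * wt D z := by
  have hroot : z ≠ T.root := sset_ne_root D k hz hne
  have heq := pstat_eq D k (x := z) hroot
  rw [hz.1] at heq
  split_ifs at heq with hc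
  · exact absurd heq.symm hne
  · have hps : pstat D k (T.parent z) = ρ := heq.symm
    have hw : wt D z ≤ wt D (T.parent z) := wt_mono D (T.anc_parent z)
    refine ⟨⟨hps, le_trans hz.2 hw⟩, ?_⟩
    push_neg at hc
    have := hc hz.2
    rw [hps] at this
    omega

lemma sset_chain (D : TDecomp G T) (k : ℕ) {ρ : ι} :
    ∀ z ∈ sset D k ρ, T.chainIn (sset D k ρ) z ρ := by
  suffices h : ∀ (n : ℕ) (z : ι), T.depth z = n → z ∈ sset D k ρ →
      T.chainIn (sset D k ρ) z ρ by
    exact fun z hz => h (T.depth z) z rfl hz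
  intro n
  induction n using Nat.strong_induction_on with
  | _ n IH =>
    intro z hzd hz
    by_cases hne : z = ρ
    · subst hne; exact T.chainIn_self hz
    · have hroot : z ≠ T.root := sset_ne_root D k hz hne
      have hd : T.depth (T.parent z) + 1 = T.depth z := T.depth_parent hroot
      have hp := (sset_parent D k hz hne).1
      exact T.chainIn_step hz (IH (T.depth (T.parent z)) (by omega) _ rfl hp)

lemma between_mem_sset (D : TDecomp G T) (k : ℕ) {ρ z u : ι} (hz : z ∈ sset D k ρ)
    (hu : T.Anc u z) (hρu : T.Anc ρ u) : u ∈ sset D k ρ :=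
  (T.chainIn_mid (sset_chain D k z hz) hu (T.anc_canon hρu).1).1

/-- If a part root lies between another part root and a member of its part,
the two roots coincide. -/
lemma proot_between_eq (D : TDecomp G T) (k : ℕ) {ρ z u : ι} (hz : z ∈ sset D k ρ)
    (hu : T.Anc u z) (hρu : T.Anc ρ u) (hproot : pstat D k u = u) : u = ρ := by
  have := (between_mem_sset D k hz hu hρu).1
  rw [hproot] at this
  exact this

variable (D : TDecomp G T) (k : ℕ)

open Classical in
/-- The quotient tree on part-roots. -/
noncomputable def Qtree : RTree (PRoot D k) where
  parent q := if h : (q : ι) = T.root then q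
    else ⟨pstat D k (T.parent ↑q), pstat_isroot D k _⟩
  root := ⟨T.root, pstat_root D k⟩
  parent_root := dif_pos rfl
  reach := by
    suffices h : ∀ (n : ℕ) (q : PRoot D k), T.depth (q : ι) = n →
        ∃ m : ℕ, (fun q => if h : (q : ι) = T.root then q
          else ⟨pstat D k (T.parent ↑q), pstat_isroot D k _⟩ : PRoot D k → PRoot D k)^[m] q
          = ⟨T.root, pstat_root D k⟩ by
      exact fun q => h (T.depth ↑q) q rfl
    intro n
    induction n using Nat.strong_induction_on with
    | _ n IH =>
      intro q hq
      by_cases hroot : (q : ι) = T.root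
      · exact ⟨0, Subtype.ext hroot⟩
      · have hd : T.depth (T.parent ↑q) + 1 = T.depth (q : ι) := T.depth_parent hroot
        have hanc : T.Anc (pstat D k (T.parent ↑q)) (T.parent ↑q) := pstat_anc D k _
        have hdd : T.depth (pstat D k (T.parent ↑q)) ≤ T.depth (T.parent ↑q) :=
          (T.anc_canon hanc).1
        obtain ⟨m, hm⟩ := IH (T.depth (pstat D k (T.parent ↑q))) (by omega)
          ⟨pstat D k (T.parent ↑q), pstat_isroot D k _⟩ rfl
        refine ⟨m + 1, ?_⟩
        rw [Function.iterate_succ_apply]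
        rw [dif_neg hroot]
        exact hm

lemma Qtree_root_val : ((Qtree D k).root : ι) = T.root := rfl

open Classical in
lemma Qtree_parent_of_ne {q : PRoot D k} (h : (q : ι) ≠ T.root) :
    (Qtree D k).parent q = ⟨pstat D k (T.parent ↑q), pstat_isroot D k _⟩ := by
  have heq : (Qtree D k).parent q = if h : (q : ι) = T.root then q
      else ⟨pstat D k (T.parent ↑q), pstat_isroot D k _⟩ := rfl
  rw [heq, dif_neg h]

lemma Qtree_depth_wt (hα : 1 ≤ Nat.card α) (q : PRoot D k) :
    (k+1) ^ ((Qtree D k).depth q) * wt D (q : ι) ≤ Nat.card α := by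
  suffices h : ∀ (n : ℕ) (q : PRoot D k), T.depth (q : ι) = n →
      (k+1) ^ ((Qtree D k).depth q) * wt D (q : ι) ≤ Nat.card α by
    exact h (T.depth (q : ι)) q rfl
  intro n
  induction n using Nat.strong_induction_on with
  | _ n IH =>
    intro q hq
    by_cases hroot : (q : ι) = T.root
    · have hqr : q = (Qtree D k).root := Subtype.ext hroot
      rw [hqr, (Qtree D k).depth_root, pow_zero, one_mul, Qtree_root_val, wt_root]
    · have hqr : q ≠ (Qtree D k).root := fun h => hroot (congrArg Subtype.val h)
      have hQd : (Qtree D k).depth ((Qtree D k).parent q) + 1 = (Qtree D k).depth q :=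
        (Qtree D k).depth_parent hqr
      have hpar := Qtree_parent_of_ne D k hroot
      have hanc : T.Anc (pstat D k (T.parent ↑q)) (T.parent ↑q) := pstat_anc D k _
      have hd : T.depth (T.parent ↑q) + 1 = T.depth (q : ι) := T.depth_parent hroot
      have hdd : T.depth (pstat D k (T.parent ↑q)) ≤ T.depth (T.parent ↑q) :=
        (T.anc_canon hanc).1
      have hcond := (pstat_cond D k hroot q.2).2
      have hIH := IH (T.depth (pstat D k (T.parent ↑q))) (by omega)
        ⟨pstat D k (T.parent ↑q), pstat_isroot D k _⟩ rfl
      rw [← hQd, hpar]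
      calc (k+1) ^ ((Qtree D k).depth (⟨pstat D k (T.parent ↑q), pstat_isroot D k _⟩ : PRoot D k) + 1) * wt D (q : ι)
          = (k+1) ^ ((Qtree D k).depth (⟨pstat D k (T.parent ↑q), pstat_isroot D k _⟩ : PRoot D k)) * ((k+1) * wt D (q : ι)) := by ring
        _ ≤ (k+1) ^ ((Qtree D k).depth (⟨pstat D k (T.parent ↑q), pstat_isroot D k _⟩ : PRoot D k)) * wt D (pstat D k (T.parent ↑q)) := by
            exact Nat.mul_le_mul_left _ hcond
        _ ≤ Nat.card α := hIH

end ConstructionB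

section ConstructionC

open RTree

variable {α ι : Type} [Finite α] [Finite ι] {G : SimpleGraph α} {T : RTree ι}
variable (D : TDecomp G T) (k : ℕ)

/-- The bag of the part with root `q`. -/
def DQbag (q : PRoot D k) : Set α := {a : α | ∃ y ∈ sset D k (q : ι), a ∈ D.bag y}

lemma mem_DQbag {q : PRoot D k} {z : ι} {a : α} (hz : z ∈ sset D k (q : ι))
    (ha : a ∈ D.bag z) : a ∈ DQbag D k q := ⟨z, hz, ha⟩

lemma chainQ (a : α) : ∀ (n : ℕ) (z : ι), T.depth z = n → z ∈ Sa D a → 1 ≤ wt D z →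
    (Qtree D k).chainIn {q : PRoot D k | a ∈ DQbag D k q}
      ⟨pstat D k z, pstat_isroot D k z⟩ ⟨pstat D k (tp D a), pstat_isroot D k _⟩ := by
  intro n
  induction n using Nat.strong_induction_on with
  | _ n IH =>
    intro z hzd hza hwz
    have hmemz : (⟨pstat D k z, pstat_isroot D k z⟩ : PRoot D k)
        ∈ {q : PRoot D k | a ∈ DQbag D k q} :=
      mem_DQbag D k ⟨rfl, hwz⟩ hza
    by_cases hzt : z = tp D a
    · subst hzt
      exact (Qtree D k).chainIn_self hmemz
    · have hchainSa := tp_chain D a z hza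
      have hpz : T.parent z ∈ Sa D a := T.chainIn_parent_mem hchainSa hzt
      have hzroot : z ≠ T.root := by
        intro h
        subst h
        have hanc := T.chainIn_anc hchainSa
        have hle := (T.anc_canon hanc).1
        rw [T.depth_root] at hle
        have h0 : T.depth (tp D a) = 0 := by omega
        exact hzt (T.depth_eq_zero_iff.1 h0).symm
      have hwp : 1 ≤ wt D (T.parent z) := le_trans hwz (wt_mono D (T.anc_parent z))
      have hd := T.depth_parent hzroot
      have hIH := IH (T.depth (T.parent z)) (by omega) (T.parent z) rfl hpz hwp
      have heq := pstat_eq D k hzroot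
      split_ifs at heq with hc
      · -- z is itself a part root
        set q0 : PRoot D k := ⟨pstat D k z, pstat_isroot D k z⟩ with hq0
        have hval : (q0 : ι) = z := heq
        have hQpar := Qtree_parent_of_ne D k (q := q0) (by rw [hval]; exact hzroot)
        have hQpar2 : (Qtree D k).parent q0 = ⟨pstat D k (T.parent z), pstat_isroot D k _⟩ := by
          rw [hQpar]
          exact Subtype.ext (by rw [hval])
        apply (Qtree D k).chainIn_step hmemz
        rw [hQpar2]
        exact hIH
      · have hsub : (⟨pstat D k z, pstat_isroot D k z⟩ : PRoot D k)
            = ⟨pstat D k (T.parent z), pstat_isroot D k _⟩ := Subtype.ext heq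
        rw [hsub]
        exact hIH

/-- The tree-decomposition of `G` over the quotient tree. -/
noncomputable def DQ (hα : 1 ≤ Nat.card α) : TDecomp G (Qtree D k) where
  bag := DQbag D k
  bags_connected := by
    intro a
    apply (Qtree D k).connected_of_chain
      (t := ⟨pstat D k (tp D a), pstat_isroot D k _⟩)
      (ht := mem_DQbag D k ⟨rfl, wt_pos_of_mem D (tp_conf D a)⟩ (tp_mem D a))
    intro q hq
    obtain ⟨z, hzs, hzb⟩ := hq
    have hch := chainQ D k a (T.depth z) z rfl hzb hzs.2
    have hsub : (⟨pstat D k z, pstat_isroot D k z⟩ : PRoot D k) = q := Subtype.ext hzs.1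
    rwa [hsub] at hch
  edges_covered := by
    intro a bb hadj
    obtain ⟨z3, ha3, hb3⟩ := D.edges_covered a bb hadj
    have hta : T.Anc (tp D a) z3 := tp_anc D ha3
    have htb : T.Anc (tp D bb) z3 := tp_anc D hb3
    rcases T.anc_comparable hta htb with h | h
    · -- tp a is an ancestor of tp b, so tp b is the deeper one
      have htbSa : tp D bb ∈ Sa D a :=
        (T.chainIn_mid (tp_chain D a z3 ha3) htb (T.anc_canon h).1).1
      refine ⟨⟨pstat D k (tp D bb), pstat_isroot D k _⟩, ?_, ?_⟩
      · exact mem_DQbag D k ⟨rfl, wt_pos_of_mem D (tp_conf D bb)⟩ htbSa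
      · exact mem_DQbag D k ⟨rfl, wt_pos_of_mem D (tp_conf D bb)⟩ (tp_mem D bb)
    · have htaSb : tp D a ∈ Sa D bb :=
        (T.chainIn_mid (tp_chain D bb z3 hb3) hta (T.anc_canon h).1).1
      refine ⟨⟨pstat D k (tp D a), pstat_isroot D k _⟩, ?_, ?_⟩
      · exact mem_DQbag D k ⟨rfl, wt_pos_of_mem D (tp_conf D a)⟩ (tp_mem D a)
      · exact mem_DQbag D k ⟨rfl, wt_pos_of_mem D (tp_conf D a)⟩ htaSb

end ConstructionC

section ConstructionD

open RTree

variable {α ι : Type} [Finite α] [Finite ι] {G : SimpleGraph α} {T : RTree ι}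

lemma sum_ncard_le {β γ : Type} [Finite γ] (Lf : Finset β) (f : β → Set γ) (C : Set γ)
    (hsub : ∀ z ∈ Lf, f z ⊆ C)
    (hdisj : ∀ z ∈ Lf, ∀ z' ∈ Lf, z ≠ z' → f z ∩ f z' ⊆ ∅) :
    ∑ z ∈ Lf, (f z).ncard ≤ C.ncard := by
  classical
  induction Lf using Finset.induction_on generalizing C with
  | empty => simp
  | insert a s ha ih =>
    rw [Finset.sum_insert ha]
    have hsub' : ∀ z ∈ s, f z ⊆ C \ f a := by
      intro z hz w hw
      refine ⟨hsub z (Finset.mem_insert_of_mem hz) hw, fun hwa => ?_⟩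
      exact hdisj a (Finset.mem_insert_self a s) z (Finset.mem_insert_of_mem hz)
        (fun h => ha (h ▸ hz)) ⟨hwa, hw⟩
    have hdisj' : ∀ z ∈ s, ∀ z' ∈ s, z ≠ z' → f z ∩ f z' ⊆ ∅ := fun z hz z' hz' hne =>
      hdisj z (Finset.mem_insert_of_mem hz) z' (Finset.mem_insert_of_mem hz') hne
    have hih := ih (C \ f a) hsub' hdisj'
    have hfa : f a ⊆ C := hsub a (Finset.mem_insert_self a s)
    have := Set.ncard_diff_add_ncard_of_subset hfa (Set.toFinite C)
    omega

variable (D : TDecomp G T) (k : ℕ)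

lemma conf_disjoint {z z' : ι} (hzz : T.depth z = T.depth z') (hne : z ≠ z') :
    conf D z ∩ conf D z' ⊆ ∅ := by
  rintro a ⟨h1, h2⟩
  have hm1 : T.Anc z (tp D a) := h1 (tp_mem D a)
  have hm2 : T.Anc z' (tp D a) := h2 (tp_mem D a)
  rcases T.anc_comparable hm1 hm2 with h | h
  · exact hne (T.anc_eq_of_depth_le h (le_of_eq hzz.symm))
  · exact hne (T.anc_eq_of_depth_le h (le_of_eq hzz)).symm

lemma layer_ncard_le (q : PRoot D k) (i : ℕ) :
    ({z : ι | z ∈ sset D k (q : ι) ∧ T.depth z = T.depth (q : ι) + (i+1)}).ncard ≤ k := by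
  set ρ := (q : ι) with hρ
  set L := {z : ι | z ∈ sset D k ρ ∧ T.depth z = T.depth ρ + (i+1)} with hL
  have hLfin : L.Finite := Set.toFinite _
  set W := wt D ρ with hW
  have hkey : ∀ z ∈ L, (W + 1 ≤ (k+1) * wt D z) ∧ conf D z ⊆ conf D ρ := by
    intro z hz
    have hne : z ≠ ρ := by
      intro h
      rw [h] at hz
      have := hz.2
      omega
    refine ⟨by have := (sset_parent D k hz.1 hne).2; omega, ?_⟩
    exact fun a ha => Set.Subset.trans ha (desc_mono (sset_anc D k hz.1))
  set Lf := hLfin.toFinset with hLf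
  have hmemLf : ∀ z, z ∈ Lf ↔ z ∈ L := fun z => hLfin.mem_toFinset
  have hsum : ∑ z ∈ Lf, (conf D z).ncard ≤ W := by
    apply sum_ncard_le
    · intro z hz
      exact (hkey z ((hmemLf z).1 hz)).2
    · intro z hz z' hz' hne
      exact conf_disjoint D ((((hmemLf z).1 hz)).2.trans (((hmemLf z').1 hz')).2.symm) hne
  have hcard : Lf.card * (W + 1) ≤ (k+1) * W := by
    calc Lf.card * (W + 1) = ∑ _z ∈ Lf, (W + 1) := by
          rw [Finset.sum_const, smul_eq_mul]
      _ ≤ ∑ z ∈ Lf, (k+1) * wt D z :=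
          Finset.sum_le_sum (fun z hz => (hkey z ((hmemLf z).1 hz)).1)
      _ = (k+1) * ∑ z ∈ Lf, wt D z := by rw [Finset.mul_sum]
      _ ≤ (k+1) * W := Nat.mul_le_mul_left _ hsum
  have hncard : L.ncard = Lf.card := Set.ncard_eq_toFinset_card L hLfin
  by_contra hgt
  push_neg at hgt
  have h1 : k + 1 ≤ Lf.card := by omega
  have h2 : (k+1) * (W+1) ≤ (k+1) * W :=
    le_trans (Nat.mul_le_mul_right _ h1) hcard
  have h3 : W + 1 ≤ W := Nat.le_of_mul_le_mul_left h2 (by omega)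
  omega

/-- Separation: if `ρ₂` is a part root strictly below the part root `ρ₁`, then any vertex
whose bag-set meets both parts has `ρ₂` in its bag-set. -/
lemma sep_mem {ρ1 ρ2 : ι} (h2 : pstat D k ρ2 = ρ2) (hne : ρ1 ≠ ρ2)
    (h12 : T.Anc ρ1 ρ2) {a : α} {z1 z2 : ι} (hz1 : z1 ∈ sset D k ρ1) (hz1a : z1 ∈ Sa D a)
    (hz2 : z2 ∈ sset D k ρ2) (hz2a : z2 ∈ Sa D a) :
    ρ2 ∈ Sa D a ∧ T.Anc (tp D a) ρ2 ∧ tp D a ≠ ρ2 := by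
  have hdisj : ¬ T.Anc ρ2 z1 := by
    intro h
    exact hne (proot_between_eq D k hz1 h h12 h2).symm
  have hcomp := T.anc_comparable (tp_anc D hz2a) (sset_anc D k hz2)
  have hanc : T.Anc (tp D a) ρ2 ∧ tp D a ≠ ρ2 := by
    rcases hcomp with h | h
    · refine ⟨h, fun heq => ?_⟩
      exact hdisj (heq ▸ tp_anc D hz1a)
    · exact absurd (T.anc_trans h (tp_anc D hz1a)) hdisj
  refine ⟨?_, hanc⟩
  exact (T.chainIn_mid (tp_chain D a z2 hz2a) (sset_anc D k hz2) (T.anc_canon hanc.1).1).1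

lemma adhesion_comp (hα : 1 ≤ Nat.card α) (x y : PRoot D k) (hne : (x : ι) ≠ (y : ι))
    (h12 : T.Anc (x : ι) (y : ι)) :
    ∃ u v : ι, u ≠ v ∧ DQbag D k x ∩ DQbag D k y = D.bag u ∩ D.bag v := by
  set ρ1 := (x : ι) with hρ1
  set ρ2 := (y : ι) with hρ2
  set A := {g : ι | g ∈ sset D k ρ1 ∧ T.Anc g ρ2} with hA
  have hAne : ρ1 ∈ A := ⟨sset_mem_self D k hα x.2, h12⟩
  obtain ⟨g, hgA, hgmax⟩ := Set.exists_max_image A T.depth (Set.toFinite A) ⟨ρ1, hAne⟩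
  have hgρ2 : g ≠ ρ2 := by
    intro h
    rw [h] at hgA
    have h1 : pstat D k ρ2 = ρ1 := hgA.1.1
    rw [y.2] at h1
    exact hne h1.symm
  refine ⟨g, ρ2, hgρ2, ?_⟩
  ext a
  constructor
  · rintro ⟨⟨z1, hz1, hz1a⟩, ⟨z2, hz2, hz2a⟩⟩
    obtain ⟨hρ2Sa, htanc, htne⟩ := sep_mem D k y.2 hne h12 hz1 hz1a hz2 hz2a
    refine ⟨?_, hρ2Sa⟩
    -- a ∈ D.bag g
    have hcomp := T.anc_comparable hgA.2 htanc
    rcases hcomp with h | h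
    · -- g is an ancestor of tp a ... then tp a ∈ A and maximality forces g = tp a
      have htains : tp D a ∈ sset D k ρ1 := by
        have hanc1 : T.Anc ρ1 (tp D a) := T.anc_trans (sset_anc D k hgA.1) h
        exact (T.chainIn_mid (sset_chain D k z1 hz1) (tp_anc D hz1a)
          (T.anc_canon hanc1).1).1
      have htaA : tp D a ∈ A := ⟨htains, htanc⟩
      have hdle := hgmax _ htaA
      have hgta : g = tp D a := T.anc_eq_of_depth_le h hdle
      rw [hgta]
      exact tp_mem D a
    · -- tp a is an ancestor of g
      have hancg : T.Anc g z2 := T.anc_trans hgA.2 (sset_anc D k hz2)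
      exact (T.chainIn_mid (tp_chain D a z2 hz2a) hancg (T.anc_canon h).1).1
  · rintro ⟨hg, hρ2⟩
    exact ⟨⟨g, hgA.1, hg⟩, ⟨ρ2, sset_mem_self D k hα y.2, hρ2⟩⟩

lemma adhesion_incomp (hα : 1 ≤ Nat.card α) (x y : PRoot D k) (hne : (x : ι) ≠ (y : ι))
    (h12 : ¬ T.Anc (x : ι) (y : ι)) (h21 : ¬ T.Anc (y : ι) (x : ι)) :
    ∃ u v : ι, u ≠ v ∧ DQbag D k x ∩ DQbag D k y = D.bag u ∩ D.bag v := by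
  refine ⟨(x : ι), (y : ι), hne, ?_⟩
  ext a
  constructor
  · rintro ⟨⟨z1, hz1, hz1a⟩, ⟨z2, hz2, hz2a⟩⟩
    have key : ∀ (p q : PRoot D k) (zp zq : ι), zp ∈ sset D k (p : ι) → zp ∈ Sa D a →
        zq ∈ sset D k (q : ι) → zq ∈ Sa D a → ¬ T.Anc (p : ι) (q : ι) →
        ¬ T.Anc (q : ι) (p : ι) → a ∈ D.bag (p : ι) := by
      intro p q zp zq hzp hzpa hzq hzqa hpq hqp
      have hnotanc : ¬ T.Anc (p : ι) (tp D a) := by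
        intro h
        have h1 : T.Anc (p : ι) zq := T.anc_trans h (tp_anc D hzqa)
        rcases T.anc_comparable h1 (sset_anc D k hzq) with hh | hh
        · exact hpq hh
        · exact hqp hh
      have hcomp := T.anc_comparable (tp_anc D hzpa) (sset_anc D k hzp)
      have htap : T.Anc (tp D a) (p : ι) := by
        rcases hcomp with h | h
        · exact h
        · exact absurd h hnotanc
      exact (T.chainIn_mid (tp_chain D a zp hzpa) (sset_anc D k hzp)
        (T.anc_canon htap).1).1
    exact ⟨key x y z1 z2 hz1 hz1a hz2 hz2a h12 h21,
      key y x z2 z1 hz2 hz2a hz1 hz1a h21 h12⟩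
  · rintro ⟨hg, hρ2⟩
    exact ⟨⟨(x : ι), sset_mem_self D k hα x.2, hg⟩, ⟨(y : ι), sset_mem_self D k hα y.2, hρ2⟩⟩

lemma adhesion (hα : 1 ≤ Nat.card α) (x y : PRoot D k) (hxy : x ≠ y) :
    ∃ u v : ι, u ≠ v ∧ DQbag D k x ∩ DQbag D k y = D.bag u ∩ D.bag v := by
  have hne : (x : ι) ≠ (y : ι) := fun h => hxy (Subtype.ext h)
  by_cases h12 : T.Anc (x : ι) (y : ι)
  · exact adhesion_comp D k hα x y hne h12
  · by_cases h21 : T.Anc (y : ι) (x : ι)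
    · obtain ⟨u, v, huv, heq⟩ := adhesion_comp D k hα y x (Ne.symm hne) h21
      exact ⟨u, v, huv, by rw [Set.inter_comm, heq]⟩
    · exact adhesion_incomp D k hα x y hne h12 h21

end ConstructionD

section ConstructionE

open RTree

variable {α ι : Type} [Finite α] [Finite ι] {G : SimpleGraph α} {T : RTree ι}
variable (D : TDecomp G T) (k : ℕ)

lemma part_skinny (hα : 1 ≤ Nat.card α) {b : ℝ} (hb : 1 ≤ b) (hk : (k : ℝ) ≤ b)
    (q : PRoot D k) :
    (T.subtree (sset D k (q : ι)) (q : ι) (sset_chain D k)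
      (sset_mem_self D k hα q.2)).Skinny b := by
  intro i
  cases i with
  | zero =>
    have hset : {x : ↥(sset D k (q : ι)) | (T.subtree (sset D k (q : ι)) (q : ι)
        (sset_chain D k) (sset_mem_self D k hα q.2)).depth x = 0}
        = {(T.subtree (sset D k (q : ι)) (q : ι) (sset_chain D k)
            (sset_mem_self D k hα q.2)).root} := by
      ext x
      simp only [Set.mem_setOf_eq, Set.mem_singleton_iff]
      exact (T.subtree (sset D k (q : ι)) (q : ι) (sset_chain D k)
        (sset_mem_self D k hα q.2)).depth_eq_zero_iff
    rw [hset, Set.ncard_singleton]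
    exact_mod_cast hb
  | succ i =>
    have himg : Subtype.val '' {x : ↥(sset D k (q : ι)) | (T.subtree (sset D k (q : ι)) (q : ι)
          (sset_chain D k) (sset_mem_self D k hα q.2)).depth x = i + 1}
        = {z : ι | z ∈ sset D k (q : ι) ∧ T.depth z = T.depth (q : ι) + (i+1)} := by
      ext z
      constructor
      · rintro ⟨x, hx, rfl⟩
        have hx' : T.depth (x : ι) - T.depth (q : ι) = i + 1 := by
          have h := subtree_depth T (sset D k (q : ι)) (q : ι) (sset_chain D k)
            (sset_mem_self D k hα q.2) x
          rw [← h]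
          exact hx
        have hanc := (T.anc_canon (sset_anc D k x.2)).1
        exact ⟨x.2, by omega⟩
      · rintro ⟨hzs, hzd⟩
        refine ⟨⟨z, hzs⟩, ?_, rfl⟩
        show (T.subtree (sset D k (q : ι)) (q : ι) (sset_chain D k)
          (sset_mem_self D k hα q.2)).depth ⟨z, hzs⟩ = i + 1
        rw [subtree_depth]
        simp only
        omega
    have hcount : ({x : ↥(sset D k (q : ι)) | (T.subtree (sset D k (q : ι)) (q : ι)
        (sset_chain D k) (sset_mem_self D k hα q.2)).depth x = i + 1}).ncard ≤ k := by
      rw [← Set.ncard_image_of_injective _ Subtype.val_injective, himg]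
      exact layer_ncard_le D k q i
    calc (({x : ↥(sset D k (q : ι)) | (T.subtree (sset D k (q : ι)) (q : ι)
          (sset_chain D k) (sset_mem_self D k hα q.2)).depth x = i + 1}).ncard : ℝ)
        ≤ (k : ℝ) := by exact_mod_cast hcount
      _ ≤ b := hk

noncomputable def DT (hα : 1 ≤ Nat.card α) (q : PRoot D k) :
    TDecomp (torso (DQ D k hα) q)
      (T.subtree (sset D k (q : ι)) (q : ι) (sset_chain D k) (sset_mem_self D k hα q.2)) where
  bag := fun y => {v : ↥((DQ D k hα).bag q) | (v : α) ∈ D.bag (y : ι)}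
  bags_connected := by
    intro v
    obtain ⟨z0, hz0s, hz0b⟩ := v.2
    have h1 : T.Anc (tp D (v : α)) z0 := tp_anc D hz0b
    have h2 : T.Anc (q : ι) z0 := sset_anc D k hz0s
    have hgen : ∀ m (hms : m ∈ sset D k (q : ι)), (v : α) ∈ D.bag m →
        T.depth (tp D (v : α)) ≤ T.depth m →
        (∀ y : ↥(sset D k (q : ι)), (v : α) ∈ D.bag (y : ι) → T.Anc m (y : ι)) →
        ((T.subtree (sset D k (q : ι)) (q : ι) (sset_chain D k)
          (sset_mem_self D k hα q.2)).graph.induce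
          {y : ↥(sset D k (q : ι)) | (v : α) ∈ D.bag (y : ι)}).Connected := by
      intro m hms hmv hdtv hanc
      apply connected_of_chain _ (t := ⟨m, hms⟩)
      · exact hmv
      intro y hy
      have hys : (y : ι) ∈ sset D k (q : ι) := y.2
      have hyv : (v : α) ∈ D.bag (y : ι) := hy
      have hanc_m : T.Anc m (y : ι) := hanc y hyv
      have hdρm : T.depth (q : ι) ≤ T.depth m := (T.anc_canon (sset_anc D k hms)).1
      obtain ⟨hdmy, hcanon⟩ := T.anc_canon hanc_m
      apply subtree_chainIn T (sset D k (q : ι)) (q : ι) (sset_chain D k)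
        (sset_mem_self D k hα q.2) _ y ⟨m, hms⟩ (T.depth (y : ι) - T.depth m) hcanon
      · intro i hi hiρ
        have hdi : T.depth (T.parent^[i] (y : ι)) = T.depth (y : ι) - i :=
          T.depth_iterate (by omega)
        rw [hiρ] at hdi
        omega
      · intro i hi
        have hsmem : T.parent^[i] (y : ι) ∈ sset D k (q : ι) := by
          have hρle := (T.anc_canon (sset_anc D k hys)).1
          exact (T.chainIn_canon (sset_chain D k (y : ι) hys)).2 i (by omega)
        have hSamem : T.parent^[i] (y : ι) ∈ Sa D (v : α) := by
          have htvle := (T.anc_canon (tp_anc D hyv)).1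
          exact (T.chainIn_canon (tp_chain D (v : α) (y : ι) hyv)).2 i (by omega)
        exact ⟨hsmem, hSamem⟩
    rcases T.anc_comparable h1 h2 with hcase | hcase
    · exact hgen (q : ι) (sset_mem_self D k hα q.2)
        ((T.chainIn_mid (tp_chain D (v : α) z0 hz0b) h2 (T.anc_canon hcase).1).1)
        (T.anc_canon hcase).1
        (fun y _ => sset_anc D k y.2)
    · exact hgen (tp D (v : α)) (between_mem_sset D k hz0s h1 hcase) (tp_mem D (v : α))
        le_rfl (fun y hy => tp_anc D hy)
  edges_covered := by
    intro u v hadj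
    have hadj' : (u ≠ v) ∧
        ((G.Adj (u : α) (v : α) ∨ ∃ y', (Qtree D k).Adj q y' ∧ (u : α) ∈ (DQ D k hα).bag y'
            ∧ (v : α) ∈ (DQ D k hα).bag y') ∨
         (G.Adj (v : α) (u : α) ∨ ∃ y', (Qtree D k).Adj q y' ∧ (v : α) ∈ (DQ D k hα).bag y'
            ∧ (u : α) ∈ (DQ D k hα).bag y')) := by
      simpa [torso, SimpleGraph.fromRel_adj] using hadj
    obtain ⟨hne, hor⟩ := hadj'
    have hrel : G.Adj (u : α) (v : α) ∨ ∃ y', (Qtree D k).Adj q y' ∧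
        (u : α) ∈ (DQ D k hα).bag y' ∧ (v : α) ∈ (DQ D k hα).bag y' := by
      rcases hor with h | h
      · exact h
      · rcases h with h | ⟨y', hy1, hy2, hy3⟩
        · exact Or.inl h.symm
        · exact Or.inr ⟨y', hy1, hy3, hy2⟩
    obtain ⟨z1, hz1s, hz1u⟩ := u.2
    obtain ⟨z2, hz2s, hz2v⟩ := v.2
    rcases hrel with hG | ⟨y', hQadj, hu', hv'⟩
    · -- a G-edge inside the bag: Helly
      obtain ⟨z3, hz3u, hz3v⟩ := D.edges_covered _ _ hG
      rcases le_total (T.depth (tp D (u : α))) (T.depth (tp D (v : α))) with h1 | h1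
      · rcases le_total (T.depth (tp D (v : α))) (T.depth (q : ι)) with h2 | h2
        · exact ⟨⟨(q : ι), sset_mem_self D k hα q.2⟩,
            (T.chainIn_mid (tp_chain D _ z1 hz1u) (sset_anc D k hz1s) (le_trans h1 h2)).1,
            (T.chainIn_mid (tp_chain D _ z2 hz2v) (sset_anc D k hz2s) h2).1⟩
        · exact ⟨⟨tp D (v : α), (T.chainIn_mid (sset_chain D k z2 hz2s) (tp_anc D hz2v) h2).1⟩,
            (T.chainIn_mid (tp_chain D _ z3 hz3u) (tp_anc D hz3v) h1).1,
            tp_mem D (v : α)⟩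
      · rcases le_total (T.depth (tp D (u : α))) (T.depth (q : ι)) with h2 | h2
        · exact ⟨⟨(q : ι), sset_mem_self D k hα q.2⟩,
            (T.chainIn_mid (tp_chain D _ z1 hz1u) (sset_anc D k hz1s) h2).1,
            (T.chainIn_mid (tp_chain D _ z2 hz2v) (sset_anc D k hz2s) (le_trans h1 h2)).1⟩
        · exact ⟨⟨tp D (u : α), (T.chainIn_mid (sset_chain D k z1 hz1s) (tp_anc D hz1u) h2).1⟩,
            tp_mem D (u : α),
            (T.chainIn_mid (tp_chain D _ z3 hz3v) (tp_anc D hz3u) h1).1⟩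
    · -- an adhesion edge with a Q-neighbour
      obtain ⟨hqy, hpar⟩ := hQadj
      obtain ⟨z1', hz1's, hz1'u⟩ := hu'
      obtain ⟨z2', hz2's, hz2'v⟩ := hv'
      rcases hpar with hp | hp
      · -- y' is the Q-parent of q
        have hqroot : (q : ι) ≠ T.root := by
          intro h
          have hQp : (Qtree D k).parent q = q := dif_pos h
          rw [hQp] at hp
          exact hqy hp
        have hy'val : (y' : ι) = pstat D k (T.parent (q : ι)) := by
          rw [← hp, Qtree_parent_of_ne D k hqroot]
        have hancρ' : T.Anc (y' : ι) (q : ι) := by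
          rw [hy'val]
          exact T.anc_trans (pstat_anc D k _) (T.anc_parent _)
        have hney : (y' : ι) ≠ (q : ι) := fun h => hqy (Subtype.ext h).symm
        exact ⟨⟨(q : ι), sset_mem_self D k hα q.2⟩,
          (sep_mem D k q.2 hney hancρ' hz1's hz1'u hz1s hz1u).1,
          (sep_mem D k q.2 hney hancρ' hz2's hz2'v hz2s hz2v).1⟩
      · -- q is the Q-parent of y'
        have hy'root : (y' : ι) ≠ T.root := by
          intro h
          have hQp : (Qtree D k).parent y' = y' := dif_pos h
          rw [hQp] at hp
          exact hqy hp.symm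
        have hqval : (q : ι) = pstat D k (T.parent (y' : ι)) := by
          rw [← hp, Qtree_parent_of_ne D k hy'root]
        have hancρ : T.Anc (q : ι) (y' : ι) := by
          rw [hqval]
          exact T.anc_trans (pstat_anc D k _) (T.anc_parent _)
        have hney : (q : ι) ≠ (y' : ι) := fun h => hqy (Subtype.ext h)
        have hsepu := sep_mem D k y'.2 hney hancρ hz1s hz1u hz1's hz1'u
        have hsepv := sep_mem D k y'.2 hney hancρ hz2s hz2v hz2's hz2'v
        have hdp := T.depth_parent hy'root
        have hdtu : T.depth (tp D (u : α)) < T.depth (y' : ι) := by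
          have hle := (T.anc_canon hsepu.2.1).1
          rcases lt_or_eq_of_le hle with h | h
          · exact h
          · exact absurd (T.anc_eq_of_depth_le hsepu.2.1 (le_of_eq h.symm)) hsepu.2.2
        have hdtv : T.depth (tp D (v : α)) < T.depth (y' : ι) := by
          have hle := (T.anc_canon hsepv.2.1).1
          rcases lt_or_eq_of_le hle with h | h
          · exact h
          · exact absurd (T.anc_eq_of_depth_le hsepv.2.1 (le_of_eq h.symm)) hsepv.2.2
        have hps : T.parent (y' : ι) ∈ sset D k (q : ι) := by
          refine ⟨hqval.symm, ?_⟩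
          exact le_trans (pstat_wt_pos D k hα y'.2) (wt_mono D (T.anc_parent _))
        refine ⟨⟨T.parent (y' : ι), hps⟩, ?_, ?_⟩
        · exact (T.chainIn_mid (tp_chain D _ z1' hz1'u)
            (T.anc_trans (T.anc_parent _) (sset_anc D k hz1's)) (by omega)).1
        · exact (T.chainIn_mid (tp_chain D _ z2' hz2'v)
            (T.anc_trans (T.anc_parent _) (sset_anc D k hz2's)) (by omega)).1

end ConstructionE

open RTree in
theorem stmt_7 {α : Type} [Finite α] (n : ℕ) (hn : 1 ≤ n) (hcard : Nat.card α = n)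
    (G : SimpleGraph α) (b : ℝ) (hb : 1 < b)
    {ι : Type} [Finite ι] (T : RTree ι) (D : TDecomp G T) :
    ∃ (ι' : Type) (_ : Finite ι') (Q : RTree ι') (DQ : TDecomp G Q),
      -- (i) every adhesion of 𝒬 is an adhesion of 𝒯
      (∀ x y : ι', x ≠ y →
        ∃ u v : ι, u ≠ v ∧ DQ.bag x ∩ DQ.bag y = D.bag u ∩ D.bag v) ∧
      -- (ii) each bag of 𝒬 is the union of the bags of a subtree `T(q)` of `T`,
      -- and these bags form a `b`-skinny tree-decomposition of the torso at `q`
      (∀ q : ι', ∃ (s : Set ι) (Tq : RTree ↥s),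
        (∀ x y : ↥s, Tq.Adj x y → T.Adj (x : ι) (y : ι)) ∧
        DQ.bag q = {a : α | ∃ y ∈ s, a ∈ D.bag y} ∧
        Tq.Skinny b ∧
        ∃ DT : TDecomp (torso DQ q) Tq,
          ∀ y : ↥s, DT.bag y = {v : ↥(DQ.bag q) | (v : α) ∈ D.bag (y : ι)}) ∧
      -- (iii) the height of `Q` is at most `log_b n`
      ((Q.height : ℝ) ≤ Real.logb b n) := by
  classical
  set k := ⌊b⌋₊ with hkdef
  have hα : 1 ≤ Nat.card α := by rw [hcard]; exact hn
  have hb0 : (0 : ℝ) < b := lt_trans zero_lt_one hb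
  refine ⟨PRoot D k, inferInstance, Qtree D k, DQ D k hα, ?_, ?_, ?_⟩
  · exact adhesion D k hα
  · intro q
    refine ⟨sset D k (q : ι),
      T.subtree (sset D k (q : ι)) (q : ι) (sset_chain D k) (sset_mem_self D k hα q.2),
      ?_, rfl, ?_, ⟨DT D k hα q, fun y => rfl⟩⟩
    · -- the subtree adjacency is contained in the adjacency of `T`
      rintro x y ⟨hne, hor⟩
      have hvalne : (x : ι) ≠ (y : ι) := fun h => hne (Subtype.ext h)
      refine ⟨hvalne, ?_⟩
      rcases hor with h | h
      · by_cases hx : (x : ι) = (q : ι)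
        · exfalso
          have hpx : (T.subtree (sset D k (q : ι)) (q : ι) (sset_chain D k)
              (sset_mem_self D k hα q.2)).parent x = x := dif_pos hx
          rw [hpx] at h
          exact hne h
        · left
          rw [← h]
          exact (subParent_val_of_ne T (sset D k (q : ι)) (q : ι) (sset_chain D k) hx).symm
      · by_cases hy : (y : ι) = (q : ι)
        · exfalso
          have hpy : (T.subtree (sset D k (q : ι)) (q : ι) (sset_chain D k)
              (sset_mem_self D k hα q.2)).parent y = y := dif_pos hy
          rw [hpy] at h
          exact hne h.symm
        · right
          rw [← h]
          exact (subParent_val_of_ne T (sset D k (q : ι)) (q : ι) (sset_chain D k) hy).symm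
    · -- skinny
      exact part_skinny D k hα (le_of_lt hb) (Nat.floor_le hb0.le) q
  · -- height bound
    haveI : Nonempty (PRoot D k) := ⟨(Qtree D k).root⟩
    have hmem : (Qtree D k).height ∈ Set.range (Qtree D k).depth :=
      Set.Nonempty.csSup_mem (Set.range_nonempty _) (Set.finite_range _)
    obtain ⟨q0, hq0⟩ := hmem
    have hw : 1 ≤ wt D (q0 : ι) := pstat_wt_pos D k hα q0.2
    have hbound := Qtree_depth_wt D k hα q0
    rw [hcard] at hbound
    have hpow : (k+1) ^ ((Qtree D k).height) ≤ n := by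
      rw [← hq0]
      calc (k+1) ^ ((Qtree D k).depth q0)
          ≤ (k+1) ^ ((Qtree D k).depth q0) * wt D (q0 : ι) :=
            Nat.le_mul_of_pos_right _ (by omega)
        _ ≤ n := hbound
    have h1 : (b : ℝ) ^ ((Qtree D k).height) ≤ (((k+1 : ℕ)) : ℝ) ^ ((Qtree D k).height) := by
      apply pow_le_pow_left₀ hb0.le
      push_cast
      exact le_of_lt (Nat.lt_floor_add_one b)
    have h2 : (((k+1 : ℕ)) : ℝ) ^ ((Qtree D k).height) ≤ (n : ℝ) := by
      exact_mod_cast hpow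
    have hn0 : (0 : ℝ) < n := by exact_mod_cast hn
    have hbpow : (0 : ℝ) < b ^ ((Qtree D k).height) := pow_pos hb0 _
    calc ((Qtree D k).height : ℝ)
        = Real.logb b (b ^ ((Qtree D k).height)) := by
          rw [Real.logb_pow, Real.logb_self_eq_one hb, mul_one]
      _ ≤ Real.logb b n := Real.logb_le_logb_of_le hb hbpow (le_trans h1 h2)
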